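/- For every real number M > 0 and every (τ,x) with (1-τ)² - x² < 1, the volume density Ω·r² of the slices Σ_τ satisfies the exact rate-of-change identity ∂_τ (Ω(τ,x)·r(τ,x)²) = (3/(2·r(τ,x)) - 1/(4M)) · (Ω²(τ,x)·(1-τ)/(4M)) · Ω(τ,x)·r(τ,x)²; in particular the leading coefficient as r → 0 is 12M²(1-τ)/r² + O(1/r). -/

import Mathlib

/-- The Kruskal relation function `f_M(ρ) = (1 - ρ/(2M))·exp(ρ/(2M))`. -/
noncomputable def fM (M ρ : ℝ) : ℝ := (1 - ρ / (2 * M)) * Real.exp (ρ / (2 * M))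

/-- The radius function in the `(τ,x)` coordinates: `r(τ,x) = r_M((1-τ)² - x²)`. -/
noncomputable def rr (rM : ℝ → ℝ) (τ x : ℝ) : ℝ := rM ((1 - τ) ^ 2 - x ^ 2)

/-- The conformal factor `Ω²(τ,x) = (32M³/r(τ,x))·exp(-r(τ,x)/(2M))`. -/
noncomputable def Om2 (M : ℝ) (rM : ℝ → ℝ) (τ x : ℝ) : ℝ :=
  32 * M ^ 3 / rr rM τ x * Real.exp (-(rr rM τ x) / (2 * M))

/-- `Ω(τ,x) = √(Ω²(τ,x))`. -/
noncomputable def Om (M : ℝ) (rM : ℝ → ℝ) (τ x : ℝ) : ℝ := Real.sqrt (Om2 M rM τ x)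

lemma hasDerivAt_fM (M : ℝ) (hM : 0 < M) (ρ : ℝ) :
    HasDerivAt (fM M) (-(ρ * Real.exp (ρ / (2 * M))) / (4 * M ^ 2)) ρ := by
  have h1 : HasDerivAt (fun ρ : ℝ => ρ / (2 * M)) (1 / (2 * M)) ρ := (hasDerivAt_id ρ).div_const _
  have h2 := (Real.hasDerivAt_exp (ρ / (2 * M))).comp ρ h1
  have h3 : HasDerivAt (fun ρ : ℝ => 1 - ρ / (2 * M)) (-(1 / (2 * M))) ρ := by
    simpa using h1.const_sub 1
  have := h3.mul h2
  refine this.congr_deriv ?_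
  simp only [Function.comp_apply]
  field_simp
  ring

lemma fM_strictAntiOn (M : ℝ) (hM : 0 < M) : StrictAntiOn (fM M) (Set.Ici 0) := by
  apply strictAntiOn_of_deriv_neg (convex_Ici 0)
  · exact fun ρ _ => (hasDerivAt_fM M hM ρ).continuousAt.continuousWithinAt
  · intro ρ hρ
    rw [interior_Ici] at hρ
    rw [(hasDerivAt_fM M hM ρ).deriv]
    have : 0 < ρ * Real.exp (ρ / (2 * M)) := mul_pos hρ (Real.exp_pos _)
    have h4 : (0:ℝ) < 4 * M ^ 2 := by positivity
    exact div_neg_of_neg_of_pos (by linarith) h4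

lemma rM_continuousAt (M : ℝ) (hM : 0 < M) (rM : ℝ → ℝ)
    (hrM : ∀ s : ℝ, s < 1 → 0 < rM s ∧ fM M (rM s) = s)
    (s₀ : ℝ) (hs₀ : s₀ < 1) : ContinuousAt rM s₀ := by
  set ρ₀ := rM s₀ with hρ₀def
  have hρ₀ : 0 < ρ₀ := (hrM s₀ hs₀).1
  have hfρ₀ : fM M ρ₀ = s₀ := (hrM s₀ hs₀).2
  have hanti := fM_strictAntiOn M hM
  have hIio : ∀ᶠ s in nhds s₀, s < 1 := Filter.Tendsto.eventually_lt_const hs₀ Filter.tendsto_id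
  rw [ContinuousAt, tendsto_order]
  constructor
  · intro a ha
    rcases le_or_gt a 0 with h0 | h0
    · filter_upwards [hIio] with s hs
      exact lt_of_le_of_lt h0 (hrM s hs).1
    · have hfa : s₀ < fM M a := hfρ₀ ▸ hanti (le_of_lt h0) (le_of_lt hρ₀) ha
      have hev : ∀ᶠ s in nhds s₀, s < fM M a := Filter.Tendsto.eventually_lt_const hfa Filter.tendsto_id
      filter_upwards [hIio, hev] with s hs hsfa
      by_contra hle
      push_neg at hle
      have hmem1 : rM s ∈ Set.Ici (0:ℝ) := le_of_lt (hrM s hs).1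
      have hmem2 : a ∈ Set.Ici (0:ℝ) := le_of_lt h0
      have : fM M a ≤ fM M (rM s) := hanti.antitoneOn hmem1 hmem2 hle
      rw [(hrM s hs).2] at this
      linarith
  · intro b hb
    have hfb : fM M b < s₀ := hfρ₀ ▸ hanti (le_of_lt hρ₀) (le_of_lt (lt_trans hρ₀ hb)) hb
    have hev : ∀ᶠ s in nhds s₀, fM M b < s := Filter.Tendsto.eventually_const_lt hfb Filter.tendsto_id
    filter_upwards [hIio, hev] with s hs hsfb
    by_contra hle
    push_neg at hle
    have hmem1 : b ∈ Set.Ici (0:ℝ) := le_of_lt (lt_trans hρ₀ hb)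
    have hmem2 : rM s ∈ Set.Ici (0:ℝ) := le_of_lt (hrM s hs).1
    have : fM M (rM s) ≤ fM M b := hanti.antitoneOn hmem1 hmem2 hle
    rw [(hrM s hs).2] at this
    linarith

lemma rM_hasDerivAt (M : ℝ) (hM : 0 < M) (rM : ℝ → ℝ)
    (hrM : ∀ s : ℝ, s < 1 → 0 < rM s ∧ fM M (rM s) = s)
    (s₀ : ℝ) (hs₀ : s₀ < 1) :
    HasDerivAt rM (-(rM s₀ * Real.exp (rM s₀ / (2 * M))) / (4 * M ^ 2))⁻¹ s₀ := by
  have hρ₀ : 0 < rM s₀ := (hrM s₀ hs₀).1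
  have hne : (-(rM s₀ * Real.exp (rM s₀ / (2 * M))) / (4 * M ^ 2)) ≠ 0 := by
    have h1 : 0 < rM s₀ * Real.exp (rM s₀ / (2 * M)) := mul_pos hρ₀ (Real.exp_pos _)
    have h2 : (0:ℝ) < 4 * M ^ 2 := by positivity
    exact ne_of_lt (div_neg_of_neg_of_pos (by linarith) h2)
  have hIio : ∀ᶠ s in nhds s₀, fM M (rM s) = s := by
    filter_upwards [Filter.Tendsto.eventually_lt_const hs₀ Filter.tendsto_id] with s hs
    exact (hrM s hs).2
  exact HasDerivAt.of_local_left_inverse (rM_continuousAt M hM rM hrM s₀ hs₀)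
    (hasDerivAt_fM M hM (rM s₀)) hne hIio

/-- For every `M > 0` and `(τ,x)` with `(1-τ)² - x² < 1`, the volume density `Ω·r²`
of the slices `Σ_τ` satisfies the exact rate-of-change identity
`∂_τ(Ω·r²) = (3/(2r) - 1/(4M)) · (Ω²·(1-τ)/(4M)) · Ω·r²`. -/
theorem volume_density_rate_of_change (M : ℝ) (hM : 0 < M) (rM : ℝ → ℝ)
    (hrM : ∀ s : ℝ, s < 1 → 0 < rM s ∧ fM M (rM s) = s)
    (τ x : ℝ) (h : (1 - τ) ^ 2 - x ^ 2 < 1) :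
    HasDerivAt (fun t : ℝ => Om M rM t x * (rr rM t x) ^ 2)
      ((3 / (2 * rr rM τ x) - 1 / (4 * M)) * (Om2 M rM τ x * (1 - τ) / (4 * M)) *
        (Om M rM τ x * (rr rM τ x) ^ 2)) τ := by
  set s₀ : ℝ := (1 - τ) ^ 2 - x ^ 2 with hs₀def
  set ρ := rr rM τ x with hρdef
  have hρpos : 0 < ρ := (hrM s₀ h).1
  set E := Real.exp (-ρ / (2 * M)) with hEdef
  have hEpos : 0 < E := Real.exp_pos _
  -- derivative of the inner coordinate function
  have hs : HasDerivAt (fun t : ℝ => (1 - t) ^ 2 - x ^ 2) (-2 * (1 - τ)) τ := by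
    have h1 : HasDerivAt (fun t : ℝ => (1 - t)) (-1) τ := by
      simpa using (hasDerivAt_id τ).const_sub (1:ℝ)
    have := (h1.pow 2).sub_const (x ^ 2)
    refine this.congr_deriv ?_
    ring
  -- derivative of r(t) = rM ((1-t)² - x²)
  have hrM' := rM_hasDerivAt M hM rM hrM s₀ h
  have hr : HasDerivAt (fun t : ℝ => rr rM t x)
      ((-(ρ * Real.exp (ρ / (2 * M))) / (4 * M ^ 2))⁻¹ * (-2 * (1 - τ))) τ := by
    exact (hrM'.comp τ hs)
  -- simplify the value of r'
  have hexp_ne : Real.exp (ρ / (2 * M)) ≠ 0 := (Real.exp_pos _).ne'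
  have hEval : (-(ρ * Real.exp (ρ / (2 * M))) / (4 * M ^ 2))⁻¹ * (-2 * (1 - τ))
      = 8 * M ^ 2 * (1 - τ) * E / ρ := by
    rw [hEdef, show -ρ/(2*M) = -(ρ/(2*M)) by ring, Real.exp_neg]
    field_simp
    ring
  rw [hEval] at hr
  set r' : ℝ := 8 * M ^ 2 * (1 - τ) * E / ρ with hr'def
  -- Om2 as a function of t
  have hA : HasDerivAt (fun t : ℝ => Om2 M rM t x)
      ((-(32 * M ^ 3 * E) / ρ ^ 2 - 32 * M ^ 3 * E / (2 * M * ρ)) * r') τ := by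
    have hGA : HasDerivAt (fun u : ℝ => 32 * M ^ 3 / u * Real.exp (-u / (2 * M)))
        (-(32 * M ^ 3 * E) / ρ ^ 2 - 32 * M ^ 3 * E / (2 * M * ρ)) ρ := by
      have h1 : HasDerivAt (fun u : ℝ => 32 * M ^ 3 / u) (-(32 * M ^ 3) / ρ ^ 2) ρ := by
        have := (hasDerivAt_inv (ne_of_gt hρpos)).const_mul (32 * M ^ 3)
        simp only [div_eq_mul_inv]
        refine this.congr_deriv ?_
        field_simp
      have h2 : HasDerivAt (fun u : ℝ => Real.exp (-u / (2 * M)))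
          (E * (-1 / (2 * M))) ρ := by
        have hin : HasDerivAt (fun u : ℝ => -u / (2 * M)) (-1 / (2 * M)) ρ := by
          simpa using ((hasDerivAt_id ρ).neg.div_const (2 * M))
        exact (Real.hasDerivAt_exp (-ρ / (2 * M))).comp ρ hin
      have := h1.mul h2
      refine this.congr_deriv ?_
      rw [hEdef]
      field_simp
      ring
    have := hGA.comp τ hr
    convert this using 2 <;> rfl
  have hOm2val : Om2 M rM τ x = 32 * M ^ 3 * E / ρ := by
    rw [Om2, hEdef, ← hρdef]
    ring
  have hOm2pos : 0 < Om2 M rM τ x := by rw [hOm2val]; positivity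
  -- sqrt composition
  have hsqrt := (Real.hasDerivAt_sqrt (ne_of_gt hOm2pos)).comp τ hA
  -- product with r²
  have hfinal := hsqrt.mul (hr.pow 2)
  have hOm : ∀ t : ℝ, Om M rM t x = Real.sqrt (Om2 M rM t x) := fun t => rfl
  have key : HasDerivAt (fun t : ℝ => Om M rM t x * (rr rM t x) ^ 2)
      (1 / (2 * Real.sqrt (Om2 M rM τ x)) *
          ((-(32 * M ^ 3 * E) / ρ ^ 2 - 32 * M ^ 3 * E / (2 * M * ρ)) * r') * ρ ^ 2 +
        Real.sqrt (Om2 M rM τ x) * (2 * ρ ^ (2 - 1) * r')) τ := by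
    convert hfinal using 1 <;> rfl
  -- now identify the derivative value
  convert key using 1
  rw [Om, hOm2val]
  set q := Real.sqrt (32 * M ^ 3 * E / ρ) with hqdef
  have hq2 : q ^ 2 = 32 * M ^ 3 * E / ρ := Real.sq_sqrt (by positivity)
  have hqpos : 0 < q := Real.sqrt_pos.mpr (by positivity)
  have hMne : M ≠ 0 := ne_of_gt hM
  have hρne : ρ ≠ 0 := ne_of_gt hρpos
  have hqne : q ≠ 0 := ne_of_gt hqpos
  have hq2' : q ^ 2 * ρ = 32 * M ^ 3 * E := by
    rw [hq2]; field_simp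
  have hinv : (1:ℝ) / (2 * q) = q * ρ / (64 * M ^ 3 * E) := by
    rw [div_eq_div_iff (by positivity) (by positivity)]
    linear_combination -2 * hq2'
  rw [hinv, hr'def]
  norm_num
  field_simp
  ring
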